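/- Let (W,S) be a Coxeter system, let u, v ∈ W, and let w be a reduced word for v. Then 𝓡_{u,w}(t) ≠ 0 if and only if u ≤ v in the Bruhat order. -/

import Mathlib

open Polynomial

variable {B W : Type*} [Group W] {M : CoxeterMatrix B}

open scoped Classical in
/-- The diagrammatic R̃-polynomial, defined by recursion on the word read from its last letter.
`dRAux cs ws u` where `ws` is the reversed word. -/
noncomputable def dRAux (cs : CoxeterSystem M W) : List B → W → Polynomial ℕ
  | [], u => if u = 1 then 1 else 0
  | s :: rest, u =>
      if cs.length (u * cs.simple s) < cs.length u then
        dRAux cs rest (u * cs.simple s)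
      else
        dRAux cs rest (u * cs.simple s) + Polynomial.X * dRAux cs rest u

/-- The diagrammatic R̃-polynomial `𝓡_{u,w}(t) ∈ ℕ[t]`. -/
noncomputable def dR (cs : CoxeterSystem M W) (u : W) (w : List B) : Polynomial ℕ :=
  dRAux cs w.reverse u

/-- `w` is a reduced word for `v`. -/
def IsReducedWordFor (cs : CoxeterSystem M W) (w : List B) (v : W) : Prop :=
  cs.wordProd w = v ∧ w.length = cs.length v

/-- Bruhat order via the subword property. -/
def BruhatLE (cs : CoxeterSystem M W) (u v : W) : Prop :=
  ∃ w w' : List B, IsReducedWordFor cs w v ∧ List.Sublist w' w ∧ IsReducedWordFor cs w' u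



open Polynomial

/-! Auxiliary development for the proof. -/

@[ext]
structure DRVec (W : Type*) where
  fn : W → ZMod 2
  el : W

namespace DRVec

variable [Group W]

instance : One (DRVec W) := ⟨⟨0, 1⟩⟩
instance : Mul (DRVec W) :=
  ⟨fun p q => ⟨p.fn + fun t => q.fn (p.el⁻¹ * t * p.el), p.el * q.el⟩⟩

lemma mul_fn (p q : DRVec W) :
    (p * q).fn = p.fn + fun t => q.fn (p.el⁻¹ * t * p.el) := rfl

lemma mul_el (p q : DRVec W) : (p * q).el = p.el * q.el := rfl

lemma one_fn : (1 : DRVec W).fn = 0 := rfl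

lemma one_el : (1 : DRVec W).el = 1 := rfl

set_option linter.unusedSectionVars false in
instance : Monoid (DRVec W) where
  mul_assoc p q r := by
    apply DRVec.ext
    · funext t
      show p.fn t + q.fn (p.el⁻¹ * t * p.el) + r.fn ((p.el * q.el)⁻¹ * t * (p.el * q.el))
          = p.fn t + (q.fn (p.el⁻¹ * t * p.el) + r.fn (q.el⁻¹ * (p.el⁻¹ * t * p.el) * q.el))
      rw [add_assoc]
      have h : (p.el * q.el)⁻¹ * t * (p.el * q.el) = q.el⁻¹ * (p.el⁻¹ * t * p.el) * q.el := by
        group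
      rw [h]
    · show p.el * q.el * r.el = p.el * (q.el * r.el)
      rw [mul_assoc]
  one_mul p := by
    apply DRVec.ext
    · funext t; simp [mul_fn, one_fn, one_el]
    · show (1 : W) * p.el = p.el; rw [one_mul]
  mul_one p := by
    apply DRVec.ext
    · funext t; simp [mul_fn, one_fn, one_el]
    · show p.el * (1 : W) = p.el; rw [mul_one]

end DRVec

open scoped Classical in
noncomputable def dchar (x : W) : W → ZMod 2 := fun t => if t = x then 1 else 0

lemma dchar_conj (c x : W) :
    (fun t => dchar x (c⁻¹ * t * c)) = dchar (c * x * c⁻¹) := by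
  classical
  funext t
  simp only [dchar]
  have h : (c⁻¹ * t * c = x) ↔ (t = c * x * c⁻¹) := by
    constructor
    · intro h; rw [← h]; group
    · intro h; rw [h]; group
  exact if_congr h rfl rfl

namespace CoxeterSystem

variable (cs : CoxeterSystem M W)

local prefix:100 "ℓ" => cs.length
local prefix:100 "π" => cs.wordProd
local prefix:100 "σ" => cs.simple

lemma drvec_liftable :
    M.IsLiftable (fun i => (⟨dchar (cs.simple i), cs.simple i⟩ : DRVec W)) := by
  intro i i'
  dsimp only
  set a := cs.simple i with ha
  set b := cs.simple i' with hb
  have hainv : a⁻¹ = a := cs.inv_simple i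
  have hbinv : b⁻¹ = b := cs.inv_simple i'
  have hI2 : ∀ k : ℕ, ((a*b)^k)⁻¹ = (b*a)^k := by
    intro k
    rw [← inv_pow, mul_inv_rev, hainv, hbinv]
  have hI1 : ∀ k : ℕ, (a*b)^k * a = a * (b*a)^k := by
    intro k
    induction k with
    | zero => simp
    | succ k ih =>
      rw [pow_succ', mul_assoc, ih, pow_succ', ← mul_assoc, ← mul_assoc, ← mul_assoc]
  have key : ∀ k : ℕ,
      ((⟨dchar a, a⟩ : DRVec W) * ⟨dchar b, b⟩) ^ k
        = ⟨∑ j ∈ Finset.range (2*k), dchar (a * (b*a)^j), (a*b)^k⟩ := by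
    intro k
    induction k with
    | zero =>
      rw [pow_zero, Nat.mul_zero]
      simp only [Finset.range_zero, Finset.sum_empty, pow_zero]
      rfl
    | succ k ih =>
      rw [pow_succ, ih]
      apply DRVec.ext
      · -- fn component
        have e1 : (a*b)^k * a * ((a*b)^k)⁻¹ = a * (b*a)^(2*k) := by
          rw [hI2, hI1, two_mul, pow_add, mul_assoc]
        have e2 : ((a*b)^k * a) * b * (((a*b)^k) * a)⁻¹ = a * (b*a)^(2*k+1) := by
          rw [mul_inv_rev, hI2, hainv, hI1]
          calc a * (b*a)^k * b * (a * (b*a)^k)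
              = a * ((b*a)^k * (b * a) * (b*a)^k) := by group
            _ = a * (b*a)^(2*k+1) := by
                rw [← pow_succ, ← pow_add]
                congr 2
                omega
        funext t
        show  (∑ j ∈ Finset.range (2*k), dchar (a * (b*a)^j)) t
            + ((⟨dchar a, a⟩ : DRVec W) * ⟨dchar b, b⟩).fn (((a*b)^k)⁻¹ * t * (a*b)^k)
            = (∑ j ∈ Finset.range (2*(k+1)), dchar (a * (b*a)^j)) t
        rw [show 2*(k+1) = 2*k + 1 + 1 by ring, Finset.sum_range_succ, Finset.sum_range_succ]
        simp only [DRVec.mul_fn, Pi.add_apply]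
        have c1 : dchar a (((a*b)^k)⁻¹ * t * (a*b)^k) = dchar ((a*b)^k * a * ((a*b)^k)⁻¹) t := by
          have := congrFun (dchar_conj ((a*b)^k) a) t
          simpa using this
        have c2 : dchar b (a⁻¹ * (((a*b)^k)⁻¹ * t * (a*b)^k) * a)
            = dchar (((a*b)^k * a) * b * ((a*b)^k * a)⁻¹) t := by
          have := congrFun (dchar_conj ((a*b)^k * a) b) t
          rw [← this]
          congr 1
          group
        rw [c1, c2, e1, e2, add_assoc]
      · simp [DRVec.mul_el, pow_succ]
  have hm : (a*b) ^ M.M i i' = 1 := cs.simple_mul_simple_pow i i'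
  have hm' : (b*a) ^ M.M i i' = 1 := cs.simple_mul_simple_pow' i i'
  rw [key (M.M i i')]
  apply DRVec.ext
  · show (∑ j ∈ Finset.range (2 * M.M i i'), dchar (a * (b*a)^j)) = 0
    rw [two_mul, Finset.sum_range_add]
    have : ∀ j ∈ Finset.range (M.M i i'),
        dchar (a * (b*a)^(M.M i i' + j)) = dchar (a * (b*a)^j) := by
      intro j _
      rw [pow_add, hm', one_mul]
    rw [Finset.sum_congr rfl this]
    funext t
    have hz : ∀ x : ZMod 2, x + x = 0 := by decide
    simp only [Pi.add_apply, Pi.zero_apply]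
    exact hz _
  · exact hm

/-- The parity homomorphism. -/
noncomputable def drpar : W →* DRVec W := cs.lift ⟨_, cs.drvec_liftable⟩

lemma drpar_simple (i : B) :
    cs.drpar (cs.simple i) = ⟨dchar (cs.simple i), cs.simple i⟩ :=
  cs.lift_apply_simple cs.drvec_liftable i

/-- Second projection is a monoid hom. -/
def drvecEl : DRVec W →* W where
  toFun := DRVec.el
  map_one' := rfl
  map_mul' := fun _ _ => rfl

lemma drpar_el (w : W) : (cs.drpar w).el = w := by
  have h : (drvecEl).comp cs.drpar = MonoidHom.id W := by
    apply cs.ext_simple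
    intro i
    simp [drvecEl, drpar_simple]
  have := DFunLike.congr_fun h w
  simpa [drvecEl] using this

lemma drpar_mul_fn (x y : W) (t : W) :
    (cs.drpar (x*y)).fn t = (cs.drpar x).fn t + (cs.drpar y).fn (x⁻¹ * t * x) := by
  rw [map_mul]
  simp [DRVec.mul_fn, drpar_el]

lemma drpar_fn_one (t : W) : (cs.drpar 1).fn t = 0 := by
  rw [map_one]; rfl

lemma drpar_fn_inv (x t : W) :
    (cs.drpar x⁻¹).fn (x⁻¹ * t * x) = (cs.drpar x).fn t := by
  have h0 : (cs.drpar x).fn t + (cs.drpar x⁻¹).fn (x⁻¹ * t * x) = 0 := by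
    rw [← cs.drpar_mul_fn, mul_inv_cancel]
    exact cs.drpar_fn_one t
  have : ∀ p q : ZMod 2, p + q = 0 → q = p := by decide
  exact this _ _ h0

lemma drpar_fn_refl {t : W} (ht : cs.IsReflection t) : (cs.drpar t).fn t = 1 := by
  obtain ⟨w, i, rfl⟩ := ht
  have e0 : w * cs.simple i * w⁻¹ = w * (cs.simple i * w⁻¹) := by rw [mul_assoc]
  have harg1 : w⁻¹ * (w * cs.simple i * w⁻¹) * w = cs.simple i := by group
  have harg2 : (cs.simple i)⁻¹ * cs.simple i * cs.simple i = cs.simple i := by group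
  nth_rewrite 1 [e0]
  rw [cs.drpar_mul_fn, harg1, cs.drpar_mul_fn, harg2]
  have h1 : (cs.drpar (cs.simple i)).fn (cs.simple i) = 1 := by
    rw [cs.drpar_simple]
    simp [dchar]
  have h2 : (cs.drpar w⁻¹).fn (cs.simple i) = (cs.drpar w).fn (w * cs.simple i * w⁻¹) := by
    have h3 := cs.drpar_fn_inv w (w * cs.simple i * w⁻¹)
    rw [harg1] at h3
    exact h3
  rw [h1, h2]
  have : ∀ x : ZMod 2, x + (1 + x) = 1 := by decide
  exact this _

lemma drpar_fn_mem : ∀ (ω : List B) (t : W),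
    (cs.drpar (cs.wordProd ω)).fn t ≠ 0 → t ∈ cs.leftInvSeq ω := by
  intro ω
  induction ω with
  | nil =>
    intro t h
    rw [cs.wordProd_nil] at h
    exact absurd (cs.drpar_fn_one t) h
  | cons i ω ih =>
    intro t h
    classical
    rw [cs.wordProd_cons, cs.drpar_mul_fn] at h
    have hcons : cs.leftInvSeq (i :: ω)
        = cs.simple i :: (cs.leftInvSeq ω).map (MulAut.conj (cs.simple i)) := rfl
    by_cases h1 : t = cs.simple i
    · rw [hcons, h1]
      exact List.mem_cons_self
    · have hz : (cs.drpar (cs.simple i)).fn t = 0 := by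
        rw [cs.drpar_simple]
        simp [dchar, h1]
      rw [hz, zero_add] at h
      have hmem := ih _ h
      have : t ∈ (cs.leftInvSeq ω).map (MulAut.conj (cs.simple i)) := by
        refine List.mem_map.mpr ⟨(cs.simple i)⁻¹ * t * cs.simple i, hmem, ?_⟩
        simp [MulAut.conj_apply, mul_assoc]
      rw [hcons]
      exact List.mem_cons_of_mem _ this

lemma drpar_fn_eq_one_of_lt {t w : W} (ht : cs.IsReflection t)
    (h : cs.length (t * w) < cs.length w) : (cs.drpar w).fn t = 1 := by
  by_contra h0
  have hzero : (cs.drpar w).fn t = 0 := by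
    have : ∀ x : ZMod 2, x ≠ 1 → x = 0 := by decide
    exact this _ h0
  have h1 : (cs.drpar (t * w)).fn t = 1 := by
    rw [cs.drpar_mul_fn]
    have e : t⁻¹ * t * t = t := by group
    rw [e, hzero, cs.drpar_fn_refl ht, add_zero]
  obtain ⟨ω, hred, hw⟩ := cs.exists_reduced_word' (t * w)
  have hmem : t ∈ cs.leftInvSeq ω := by
    apply cs.drpar_fn_mem
    rw [← hw, h1]
    exact one_ne_zero
  have hinv := (cs.isLeftInversion_of_mem_leftInvSeq hred hmem).2
  rw [← hw, ← mul_assoc, ht.mul_self, one_mul] at hinv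
  omega

lemma drpar_leftExchange {t : W} (ht : cs.IsReflection t) {ω : List B}
    (h : cs.length (t * cs.wordProd ω) < cs.length (cs.wordProd ω)) :
    ∃ j, j < ω.length ∧ cs.wordProd (ω.eraseIdx j) = t * cs.wordProd ω := by
  have hmem : t ∈ cs.leftInvSeq ω := by
    apply cs.drpar_fn_mem
    rw [cs.drpar_fn_eq_one_of_lt ht h]
    exact one_ne_zero
  obtain ⟨j, hj, hget⟩ := List.mem_iff_getElem.mp hmem
  have hj' : j < ω.length := by
    rw [cs.length_leftInvSeq] at hj
    exact hj
  have hgd : (cs.leftInvSeq ω).getD j 1 = t := by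
    rw [List.getD_eq_getElem _ _ hj, hget]
  exact ⟨j, hj', by rw [← cs.getD_leftInvSeq_mul_wordProd ω j, hgd]⟩

lemma drpar_rightExchange {t : W} (ht : cs.IsReflection t) {ω : List B}
    (h : cs.length (cs.wordProd ω * t) < cs.length (cs.wordProd ω)) :
    ∃ j, j < ω.length ∧ cs.wordProd (ω.eraseIdx j) = cs.wordProd ω * t := by
  have h' : cs.length (t * cs.wordProd ω.reverse) < cs.length (cs.wordProd ω.reverse) := by
    rw [cs.wordProd_reverse]
    have e : t * (cs.wordProd ω)⁻¹ = (cs.wordProd ω * t)⁻¹ := by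
      rw [mul_inv_rev, ht.inv]
    rw [e, cs.length_inv, cs.length_inv]
    exact h
  have hmem : t ∈ cs.leftInvSeq ω.reverse := by
    apply cs.drpar_fn_mem
    rw [cs.drpar_fn_eq_one_of_lt ht h']
    exact one_ne_zero
  rw [cs.leftInvSeq_reverse, List.mem_reverse] at hmem
  obtain ⟨j, hj, hget⟩ := List.mem_iff_getElem.mp hmem
  have hj' : j < ω.length := by
    rw [cs.length_rightInvSeq] at hj
    exact hj
  have hgd : (cs.rightInvSeq ω).getD j 1 = t := by
    rw [List.getD_eq_getElem _ _ hj, hget]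
  exact ⟨j, hj', by rw [← cs.wordProd_mul_getD_rightInvSeq ω j, hgd]⟩

/-- Every word contains a reduced sublist with the same product. -/
lemma drpar_reducedSub : ∀ ω : List B,
    ∃ z, z.Sublist ω ∧ cs.wordProd z = cs.wordProd ω ∧ z.length = cs.length (cs.wordProd ω) := by
  intro ω
  induction ω with
  | nil => exact ⟨[], List.Sublist.refl [], rfl, by simp [cs.wordProd_nil]⟩
  | cons i ω ih =>
    obtain ⟨z, hz1, hz2, hz3⟩ := ih
    rcases cs.length_simple_mul (cs.wordProd ω) i with hup | hdn
    · refine ⟨i :: z, hz1.cons₂ i, ?_, ?_⟩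
      · rw [cs.wordProd_cons, cs.wordProd_cons, hz2]
      · rw [cs.wordProd_cons, hup]
        simp [hz3]
    · have hlt : cs.length (cs.simple i * cs.wordProd z) < cs.length (cs.wordProd z) := by
        rw [hz2]; omega
      obtain ⟨j, hj, hje⟩ := cs.drpar_leftExchange (cs.isReflection_simple i) hlt
      refine ⟨z.eraseIdx j, ((List.eraseIdx_sublist z j).trans hz1).trans
        (List.sublist_cons_self i ω), ?_, ?_⟩
      · rw [hje, hz2, cs.wordProd_cons]
      · have hl := List.length_eraseIdx_add_one hj
        rw [cs.wordProd_cons]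
        rw [hz2] at hje
        omega

/-- One step of the Bruhat chain order. -/
def dstep (x y : W) : Prop :=
  ∃ t, cs.IsReflection t ∧ y = x * t ∧ cs.length x < cs.length y

/-- Bruhat chain order. -/
def dle : W → W → Prop := Relation.ReflTransGen cs.dstep

lemma dle_sub {u v : W} (h : cs.dle u v) :
    ∀ w : List B, cs.wordProd w = v → w.length = cs.length v →
      ∃ z, z.Sublist w ∧ cs.wordProd z = u ∧ z.length = cs.length u := by
  induction h with
  | refl => exact fun w h1 h2 => ⟨w, List.Sublist.refl w, h1, h2⟩
  | @tail b c hab hbc ih =>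
    intro w hw hwl
    obtain ⟨t, ht, rfl, hlen⟩ := hbc
    have h1 : cs.length (cs.wordProd w * t) < cs.length (cs.wordProd w) := by
      rw [hw, mul_assoc, ht.mul_self, mul_one]
      exact hlen
    obtain ⟨j, hj, hje⟩ := cs.drpar_rightExchange ht h1
    have hb : cs.wordProd (w.eraseIdx j) = b := by
      rw [hje, hw, mul_assoc, ht.mul_self, mul_one]
    obtain ⟨z', hz'1, hz'2, hz'3⟩ := cs.drpar_reducedSub (w.eraseIdx j)
    obtain ⟨z, hz1, hz2, hz3⟩ := ih z' (hz'2.trans hb) (by rw [hz'3, hb])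
    exact ⟨z, hz1.trans (hz'1.trans (List.eraseIdx_sublist w j)), hz2, hz3⟩

/-- The statement "subwords of reduced words of `v` give elements below `v`". -/
def PS (v : W) : Prop :=
  ∀ u (w : List B), cs.wordProd w = v → w.length = cs.length v →
    (∃ z, z.Sublist w ∧ cs.wordProd z = u ∧ z.length = cs.length u) → cs.dle u v

lemma drpar_z0 {m b t : W} (hP : ∀ x, cs.length x < cs.length b → cs.PS x)
    (ht : cs.IsReflection t) (hbm : b = m * t) (hlen : cs.length m < cs.length b) (i : B)
    (hdn : cs.length (b * cs.simple i) < cs.length b) :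
    cs.dle (m * cs.simple i) b := by
  obtain ⟨C, hCred, hCw⟩ := cs.exists_reduced_word' (b * cs.simple i)
  have hClen : C.length = cs.length (b * cs.simple i) := by
    rw [hCw]; exact hCred.symm
  have hDw : cs.wordProd (C ++ [i]) = b := by
    rw [cs.wordProd_append, cs.wordProd_singleton, ← hCw, cs.simple_mul_simple_cancel_right]
  have hbt : cs.length (cs.wordProd (C ++ [i]) * t) < cs.length (cs.wordProd (C ++ [i])) := by
    rw [hDw, hbm, mul_assoc, ht.mul_self, mul_one, ← hbm]
    exact hlen
  obtain ⟨j, hj, hje⟩ := cs.drpar_rightExchange ht hbt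
  have hjm : cs.wordProd ((C ++ [i]).eraseIdx j) = m := by
    rw [hje, hDw, hbm, mul_assoc, ht.mul_self, mul_one]
  have hstep : cs.dstep (b * cs.simple i) b :=
    ⟨cs.simple i, cs.isReflection_simple i,
      (cs.simple_mul_simple_cancel_right i).symm, hdn⟩
  rcases lt_or_ge j C.length with hjC | hjC
  · have hE : (C ++ [i]).eraseIdx j = C.eraseIdx j ++ [i] :=
      List.eraseIdx_append_of_lt_length hjC [i]
    rw [hE, cs.wordProd_append, cs.wordProd_singleton] at hjm
    have hms : cs.wordProd (C.eraseIdx j) = m * cs.simple i := by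
      rw [← hjm, cs.simple_mul_simple_cancel_right]
    obtain ⟨z, hz1, hz2, hz3⟩ := cs.drpar_reducedSub (C.eraseIdx j)
    have hzC : z.Sublist C := hz1.trans (List.eraseIdx_sublist C j)
    have hdle : cs.dle (m * cs.simple i) (b * cs.simple i) :=
      hP (b * cs.simple i) hdn (m * cs.simple i) C hCw.symm hClen
        ⟨z, hzC, by rw [hz2, hms], by rw [hz3, hms]⟩
    exact hdle.tail hstep
  · have hj0 : j - C.length = 0 := by
      have : j < C.length + 1 := by simpa using hj
      omega
    have hE : (C ++ [i]).eraseIdx j = C := by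
      rw [List.eraseIdx_append_of_length_le hjC, hj0]
      simp
    have hmbs : m = b * cs.simple i := by rw [← hjm, hE, ← hCw]
    have : m * cs.simple i = b := by rw [hmbs, cs.simple_mul_simple_cancel_right]
    rw [this]
    exact Relation.ReflTransGen.refl

lemma drpar_phi (n : ℕ) (hP : ∀ x, cs.length x < n → cs.PS x) {a b : W}
    (hab : cs.dle a b) :
    cs.length b ≤ n → ∀ i : B,
      (cs.length a < cs.length (a * cs.simple i) →
        cs.length b < cs.length (b * cs.simple i) →
        cs.dle (a * cs.simple i) (b * cs.simple i)) ∧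
      (cs.length a < cs.length (a * cs.simple i) →
        cs.length (b * cs.simple i) < cs.length b →
        cs.dle (a * cs.simple i) b) := by
  induction hab with
  | refl =>
    intro _ i
    constructor
    · intro _ _; exact Relation.ReflTransGen.refl
    · intro h1 h2; exact absurd h1 (by omega)
  | @tail m c hab hmc ih =>
    intro hcn i
    obtain ⟨t, ht, rfl, hlen⟩ := hmc
    have hmn : cs.length m ≤ n := le_of_lt (lt_of_lt_of_le hlen hcn)
    have ihm := ih hmn i
    constructor
    · intro hau hcu
      rcases Nat.lt_or_ge (cs.length m) (cs.length (m * cs.simple i)) with hm | hm'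
      · have h1 := ihm.1 hau hm
        refine h1.tail ?_
        refine ⟨(cs.simple i)⁻¹ * t * cs.simple i, by simpa using ht.conj (cs.simple i)⁻¹,
          by group, ?_⟩
        have hms : cs.length (m * cs.simple i) = cs.length m + 1 := by
          rcases cs.length_mul_simple m i with h | h
          · exact h
          · omega
        omega
      · have hm2 : cs.length (m * cs.simple i) < cs.length m := by
          have := cs.length_mul_simple_ne m i
          omega
        have h2 := ihm.2 hau hm2
        exact (h2.tail ⟨t, ht, rfl, hlen⟩).tail
          ⟨cs.simple i, cs.isReflection_simple i, rfl, hcu⟩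
    · intro hau hcd
      rcases Nat.lt_or_ge (cs.length (m * cs.simple i)) (cs.length m) with hm | hm'
      · exact (ihm.2 hau hm).tail ⟨t, ht, rfl, hlen⟩
      · have hm2 : cs.length m < cs.length (m * cs.simple i) := by
          have := cs.length_mul_simple_ne m i
          omega
        have h1 := ihm.1 hau hm2
        have h3 : cs.dle (m * cs.simple i) (m * t) :=
          cs.drpar_z0 (fun x hx => hP x (lt_of_lt_of_le hx hcn)) ht rfl hlen i hcd
        exact h1.trans h3

lemma drpar_psAux : ∀ n : ℕ, ∀ v : W, cs.length v ≤ n → cs.PS v := by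
  intro n
  induction n with
  | zero =>
    rintro v hv u w hw hwl ⟨z, hz1, hz2, hz3⟩
    have hv0 : cs.length v = 0 := Nat.le_zero.mp hv
    have hv1 : v = 1 := cs.length_eq_zero_iff.mp hv0
    have hw0 : w = [] := List.length_eq_zero_iff.mp (by omega)
    have hz0 : z = [] := List.sublist_nil.mp (hw0 ▸ hz1)
    have hu : u = 1 := by rw [← hz2, hz0, cs.wordProd_nil]
    rw [hu, hv1]
    exact Relation.ReflTransGen.refl
  | succ n ihn =>
    rintro v hv u w hw hwl ⟨z, hz1, hz2, hz3⟩
    by_cases hlen : z.length = w.length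
    · have hzw : z = w := hz1.eq_of_length hlen
      have : u = v := by rw [← hz2, hzw, hw]
      rw [this]
      exact Relation.ReflTransGen.refl
    · have hzw : z.length < w.length := lt_of_le_of_ne hz1.length_le hlen
      have hw0 : w ≠ [] := by
        intro h
        rw [h] at hzw
        simp at hzw
      obtain ⟨A, i, rfl⟩ : ∃ A i, w = A ++ [i] := by
        rcases List.eq_nil_or_concat w with h | ⟨A, i, h⟩
        · exact absurd h hw0
        · exact ⟨A, i, by rw [h, List.concat_eq_append]⟩
      rw [cs.wordProd_append, cs.wordProd_singleton] at hw
      have hvs : cs.wordProd A = v * cs.simple i := by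
        rw [← hw, cs.simple_mul_simple_cancel_right]
      have hAlen : A.length + 1 = cs.length v := by simpa using hwl
      have hlvs : cs.length (v * cs.simple i) + 1 = cs.length v := by
        rcases cs.length_mul_simple v i with h1 | h1
        · exfalso
          have hle := cs.length_wordProd_le A
          rw [hvs] at hle
          omega
        · exact h1
      obtain ⟨z₁, z₂, rfl, hz₁A, hz₂⟩ := List.sublist_append_iff.mp hz1
      rcases List.sublist_singleton.mp hz₂ with h2 | h2
      · rw [h2, List.append_nil] at hz2 hz3
        have hu_le : cs.dle u (v * cs.simple i) :=
          ihn (v * cs.simple i) (by omega) u A hvs (by omega) ⟨z₁, hz₁A, hz2, hz3⟩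
        exact hu_le.tail ⟨cs.simple i, cs.isReflection_simple i,
          (cs.simple_mul_simple_cancel_right i).symm, by omega⟩
      · rw [h2] at hz2 hz3
        rw [cs.wordProd_append, cs.wordProd_singleton] at hz2
        have hz3' : z₁.length + 1 = cs.length u := by simpa using hz3
        have hus : cs.wordProd z₁ = u * cs.simple i := by
          rw [← hz2, cs.simple_mul_simple_cancel_right]
        have hlus : cs.length (u * cs.simple i) + 1 = cs.length u := by
          rcases cs.length_mul_simple u i with h1 | h1
          · exfalso
            have hle := cs.length_wordProd_le z₁
            rw [hus] at hle
            omega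
          · exact h1
        have hstep : cs.dle (u * cs.simple i) (v * cs.simple i) :=
          ihn (v * cs.simple i) (by omega) (u * cs.simple i) A hvs (by omega)
            ⟨z₁, hz₁A, hus, by omega⟩
        have hphi := cs.drpar_phi n (fun x hx => ihn x (by omega)) hstep (by omega) i
        have h1 := hphi.1
          (by rw [cs.simple_mul_simple_cancel_right]; omega)
          (by rw [cs.simple_mul_simple_cancel_right]; omega)
        rw [cs.simple_mul_simple_cancel_right, cs.simple_mul_simple_cancel_right] at h1
        exact h1

lemma drpar_psAll (v : W) : cs.PS v := cs.drpar_psAux (cs.length v) v le_rfl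

end CoxeterSystem

lemma dR_poly_add_eq_zero {a b : Polynomial ℕ} (h : a + b = 0) : a = 0 ∧ b = 0 := by
  constructor <;>
  · ext n
    have h' := congrArg (fun p => Polynomial.coeff p n) h
    simp only [Polynomial.coeff_add, Polynomial.coeff_zero] at h'
    simp only [Polynomial.coeff_zero]
    omega

lemma dRAux_ne_zero_iff (cs : CoxeterSystem M W) :
    ∀ (rs : List B) (u : W), dRAux cs rs u ≠ 0 ↔
      ∃ z, z.Sublist rs.reverse ∧ cs.wordProd z = u ∧ z.length = cs.length u := by
  intro rs
  induction rs with
  | nil =>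
    intro u
    simp only [dRAux]
    constructor
    · intro h
      by_cases hu : u = 1
      · exact ⟨[], by simp, by rw [cs.wordProd_nil, hu], by simp [hu]⟩
      · rw [if_neg hu] at h
        exact absurd rfl h
    · rintro ⟨z, hz1, hz2, hz3⟩
      have hz0 : z = [] := List.sublist_nil.mp (by simpa using hz1)
      have hu : u = 1 := by rw [← hz2, hz0, cs.wordProd_nil]
      rw [if_pos hu]
      exact one_ne_zero
  | cons i rest ih =>
    intro u
    have hrev : (i :: rest).reverse = rest.reverse ++ [i] := by simp
    simp only [dRAux]
    rw [hrev]
    by_cases hd : cs.length (u * cs.simple i) < cs.length u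
    · rw [if_pos hd]
      have hlus : cs.length (u * cs.simple i) + 1 = cs.length u := by
        rcases cs.length_mul_simple u i with h | h
        · omega
        · exact h
      rw [ih (u * cs.simple i)]
      constructor
      · rintro ⟨z, hz1, hz2, hz3⟩
        refine ⟨z ++ [i], hz1.append (List.Sublist.refl [i]), ?_, ?_⟩
        · rw [cs.wordProd_append, cs.wordProd_singleton, hz2,
            cs.simple_mul_simple_cancel_right]
        · simp only [List.length_append, List.length_singleton]
          omega
      · rintro ⟨z, hz1, hz2, hz3⟩
        obtain ⟨z₁, z₂, rfl, h1, h2⟩ := List.sublist_append_iff.mp hz1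
        rcases List.sublist_singleton.mp h2 with h2' | h2'
        · rw [h2', List.append_nil] at hz2 hz3
          have hlt : cs.length (cs.wordProd z₁ * cs.simple i) < cs.length (cs.wordProd z₁) := by
            rw [hz2]; exact hd
          obtain ⟨j, hj, hje⟩ := cs.drpar_rightExchange (cs.isReflection_simple i) hlt
          refine ⟨z₁.eraseIdx j, (List.eraseIdx_sublist z₁ j).trans h1, ?_, ?_⟩
          · rw [hje, hz2]
          · have := List.length_eraseIdx_add_one hj
            omega
        · rw [h2'] at hz2 hz3
          rw [cs.wordProd_append, cs.wordProd_singleton] at hz2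
          have hus : cs.wordProd z₁ = u * cs.simple i := by
            rw [← hz2, cs.simple_mul_simple_cancel_right]
          have hz3' : z₁.length + 1 = cs.length u := by simpa using hz3
          exact ⟨z₁, h1, hus, by omega⟩
    · rw [if_neg hd]
      have hup : cs.length u < cs.length (u * cs.simple i) := by
        have := cs.length_mul_simple_ne u i
        omega
      have hlus : cs.length (u * cs.simple i) = cs.length u + 1 := by
        rcases cs.length_mul_simple u i with h | h
        · exact h
        · omega
      constructor
      · intro h
        have h' : dRAux cs rest (u * cs.simple i) ≠ 0 ∨ dRAux cs rest u ≠ 0 := by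
          by_contra hc
          push_neg at hc
          rw [hc.1, hc.2, mul_zero, add_zero] at h
          exact h rfl
        rcases h' with h' | h'
        · obtain ⟨z, hz1, hz2, hz3⟩ := (ih _).mp h'
          have hlt : cs.length (cs.wordProd z * cs.simple i) < cs.length (cs.wordProd z) := by
            rw [hz2, cs.simple_mul_simple_cancel_right]
            omega
          obtain ⟨j, hj, hje⟩ := cs.drpar_rightExchange (cs.isReflection_simple i) hlt
          refine ⟨z.eraseIdx j,
            ((List.eraseIdx_sublist z j).trans hz1).trans (List.sublist_append_left _ _),
            ?_, ?_⟩
          · rw [hje, hz2, cs.simple_mul_simple_cancel_right]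
          · have := List.length_eraseIdx_add_one hj
            omega
        · obtain ⟨z, hz1, hz2, hz3⟩ := (ih u).mp h'
          exact ⟨z, hz1.trans (List.sublist_append_left _ _), hz2, hz3⟩
      · rintro ⟨z, hz1, hz2, hz3⟩
        have hgoal : dRAux cs rest u ≠ 0 := by
          obtain ⟨z₁, z₂, rfl, h1, h2⟩ := List.sublist_append_iff.mp hz1
          rcases List.sublist_singleton.mp h2 with h2' | h2'
          · rw [h2', List.append_nil] at hz2 hz3
            exact (ih u).mpr ⟨z₁, h1, hz2, hz3⟩
          · exfalso
            rw [h2'] at hz2 hz3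
            rw [cs.wordProd_append, cs.wordProd_singleton] at hz2
            have hus : cs.wordProd z₁ = u * cs.simple i := by
              rw [← hz2, cs.simple_mul_simple_cancel_right]
            have hle := cs.length_wordProd_le z₁
            rw [hus] at hle
            have hz3' : z₁.length + 1 = cs.length u := by simpa using hz3
            omega
        intro h0
        obtain ⟨_, hb⟩ := dR_poly_add_eq_zero h0
        rcases mul_eq_zero.mp hb with hX | hq
        · exact Polynomial.X_ne_zero hX
        · exact hgoal hq

/-- For a reduced word `w` of `v`, the diagrammatic R̃-polynomial `𝓡_{u,w}` is nonzero
if and only if `u ≤ v` in the Bruhat order. -/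
theorem dR_ne_zero_iff_bruhatLE (cs : CoxeterSystem M W) (u v : W) (w : List B)
    (hw : IsReducedWordFor cs w v) :
    dR cs u w ≠ 0 ↔ BruhatLE cs u v := by
  obtain ⟨hw1, hw2⟩ := hw
  have hkey := dRAux_ne_zero_iff cs w.reverse u
  rw [List.reverse_reverse] at hkey
  rw [show dR cs u w = dRAux cs w.reverse u from rfl, hkey]
  constructor
  · rintro ⟨z, hz1, hz2, hz3⟩
    exact ⟨w, z, ⟨hw1, hw2⟩, hz1, hz2, hz3⟩
  · rintro ⟨w₂, z, ⟨hw₂1, hw₂2⟩, hsub, hz1, hz2⟩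
    have hle : cs.dle u v := cs.drpar_psAll v u w₂ hw₂1 hw₂2 ⟨z, hsub, hz1, hz2⟩
    exact cs.dle_sub hle w hw1 hw2
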